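/- Let S ⊂ ℝⁿ be a nonempty closed set and let x ∉ S be a point where d_S is not differentiable. Then the set of extreme points of D⁺d_S(x) satisfies extr(D⁺d_S(x)) = D*d_S(x) = D⁺d_S(x) ∩ ∂B₁(0), where ∂B₁(0) is the unit sphere of ℝⁿ. -/

import Mathlib

open scoped InnerProductSpace
open Metric Set Filter

noncomputable section

abbrev En (n : ℕ) := EuclideanSpace ℝ (Fin n)

variable {n : ℕ}

/-- Distance from the boundary of `Ω`. -/
noncomputable def dBd (Ω : Set (En n)) (x : En n) : ℝ := Metric.infDist x (frontier Ω)

/-- The inradius `ρ_Ω := max_{closure Ω} d_∂Ω`. -/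
noncomputable def rhoΩ (Ω : Set (En n)) : ℝ := sSup (dBd Ω '' closure Ω)

/-- The singular set `Σ(Ω)`: points of `Ω` where `d_∂Ω` is not differentiable. -/
def SingSet (Ω : Set (En n)) : Set (En n) := {x ∈ Ω | ¬ DifferentiableAt ℝ (dBd Ω) x}

/-- The cut locus: the closure of the singular set. -/
def cutLocus (Ω : Set (En n)) : Set (En n) := closure (SingSet Ω)

/-- The high ridge: points of `closure Ω` where `d_∂Ω` attains its maximum `ρ_Ω`. -/
def highRidge (Ω : Set (En n)) : Set (En n) := {x ∈ closure Ω | dBd Ω x = rhoΩ Ω}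

noncomputable def c₀ : ℝ := 3 ^ ((4 : ℝ) / 3) / 4

/-- The candidate web solution `φ_Ω`. -/
noncomputable def phiΩ (Ω : Set (En n)) (x : En n) : ℝ :=
  c₀ * (rhoΩ Ω ^ ((4 : ℝ) / 3) - (rhoΩ Ω - dBd Ω x) ^ ((4 : ℝ) / 3))

/-- The infinity Laplacian `⟨D²φ(x)∇φ(x), ∇φ(x)⟩` of a smooth function. -/
noncomputable def infLap (φ : En n → ℝ) (x : En n) : ℝ :=
  ⟪(fderiv ℝ (gradient φ) x) (gradient φ x), gradient φ x⟫_ℝ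

/-- Viscosity subsolution of `-Δ_∞ u = 1` on an open set `A`. -/
def IsViscSubsol (A : Set (En n)) (u : En n → ℝ) : Prop :=
  ∀ φ : En n → ℝ, ContDiffOn ℝ 2 φ A → ∀ x₀ ∈ A,
    IsLocalMin (φ - u) x₀ → -infLap φ x₀ ≤ 1

/-- Viscosity supersolution of `-Δ_∞ u = 1` on an open set `A`. -/
def IsViscSupersol (A : Set (En n)) (u : En n → ℝ) : Prop :=
  ∀ φ : En n → ℝ, ContDiffOn ℝ 2 φ A → ∀ x₀ ∈ A,
    IsLocalMax (φ - u) x₀ → 1 ≤ -infLap φ x₀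

/-- Viscosity solution of `-Δ_∞ u = 1` on an open set `A`. -/
def IsViscSol (A : Set (En n)) (u : En n → ℝ) : Prop :=
  ContinuousOn u A ∧ IsViscSubsol A u ∧ IsViscSupersol A u

/-- Viscosity solution of the Dirichlet problem `-Δ_∞ u = 1` in `Ω`, `u = 0` on `∂Ω`. -/
def IsDirichletSol (Ω : Set (En n)) (u : En n → ℝ) : Prop :=
  ContinuousOn u (closure Ω) ∧ (∀ x ∈ frontier Ω, u x = 0) ∧ IsViscSol Ω u

/-- `u` is a web function on `Ω`: it depends only on the distance from the boundary. -/
def IsWebOn (Ω : Set (En n)) (u : En n → ℝ) : Prop :=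
  ∃ f : ℝ → ℝ, ContinuousOn f (Set.Icc 0 (rhoΩ Ω)) ∧ ∀ x ∈ closure Ω, u x = f (dBd Ω x)

/-- Fréchet superdifferential of `u` at `x`. -/
def superDiff (u : En n → ℝ) (x : En n) : Set (En n) :=
  {p | ∀ ε > 0, ∀ᶠ y in nhds x, u y - u x - ⟪p, y - x⟫_ℝ ≤ ε * ‖y - x‖}

/-- Set of reachable gradients `D*u(x)`. -/
def reachGrad (u : En n → ℝ) (x : En n) : Set (En n) :=
  {p | ∃ xs : ℕ → En n, (∀ h, xs h ≠ x) ∧ (∀ h, DifferentiableAt ℝ u (xs h)) ∧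
    Filter.Tendsto xs Filter.atTop (nhds x) ∧
    Filter.Tendsto (fun h => gradient u (xs h)) Filter.atTop (nhds p)}

/-- The set of projections of `x` onto a closed set `S`. -/
def projSet (S : Set (En n)) (x : En n) : Set (En n) :=
  {y ∈ S | dist x y = Metric.infDist x S}

end
section Aux

open scoped InnerProductSpace
open Metric Set Filter

variable {n : ℕ}

/-- Gradient of `y ↦ ‖y - q‖` at `z ≠ q`. -/
lemma hasGradientAt_norm_sub (q z : En n) (hz : z ≠ q) :
    HasGradientAt (fun y => ‖y - q‖) (‖z - q‖⁻¹ • (z - q)) z := by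
  have hzq : z - q ≠ 0 := sub_ne_zero.2 hz
  have hnorm : (0:ℝ) < ‖z - q‖ := norm_pos_iff.2 hzq
  have hid : HasFDerivAt (fun y : En n => y - q) (ContinuousLinearMap.id ℝ (En n)) z :=
    (hasFDerivAt_id z).sub_const q
  have hinner := hid.inner ℝ hid
  have hval : ⟪z - q, z - q⟫_ℝ ≠ 0 := by
    rw [real_inner_self_eq_norm_sq]
    positivity
  have hsqrt := hinner.sqrt hval
  rw [hasGradientAt_iff_hasFDerivAt]
  have hfun : (fun y : En n => Real.sqrt ⟪y - q, y - q⟫_ℝ) = fun y => ‖y - q‖ := by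
    funext y
    rw [real_inner_self_eq_norm_sq, Real.sqrt_sq (norm_nonneg _)]
  rw [hfun] at hsqrt
  refine HasFDerivAt.congr_fderiv hsqrt ?_
  symm
  ext v
  have hs : Real.sqrt ⟪z - q, z - q⟫_ℝ = ‖z - q‖ := by
    rw [real_inner_self_eq_norm_sq, Real.sqrt_sq (norm_nonneg _)]
  simp only [InnerProductSpace.toDual_apply_apply, ContinuousLinearMap.smul_apply,
    ContinuousLinearMap.coe_comp', Function.comp_apply, ContinuousLinearMap.prod_apply,
    ContinuousLinearMap.coe_id', id_eq, fderivInnerCLM_apply, hs, smul_eq_mul]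
  rw [real_inner_smul_left, real_inner_comm]
  field_simp
  ring

lemma HasGradientAt.const_sub' {f : En n → ℝ} {G z : En n} (hf : HasGradientAt f G z) (c : ℝ) :
    HasGradientAt (fun y => c - f y) (-G) z := by
  rw [hasGradientAt_iff_hasFDerivAt] at hf ⊢
  have h := (hasFDerivAt_const c z).sub hf
  refine HasFDerivAt.congr_fderiv h ?_
  symm
  ext v
  simp [InnerProductSpace.toDual_apply_apply, inner_neg_left]

/-- touching from above lemma: if `u ≤ h` near `x`, equality at `x`, `h` differentiable, then
the gradient of `h` is in the superdifferential of `u`. -/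
lemma mem_superDiff_of_touching {u h : En n → ℝ} {x p : En n}
    (hle : ∀ y, u y ≤ h y) (heq : u x = h x) (hh : HasGradientAt h p x) :
    p ∈ superDiff u x := by
  intro ε hε
  have hlo := (hasGradientAt_iff_hasFDerivAt.1 hh).isLittleO
  rw [Asymptotics.isLittleO_iff] at hlo
  filter_upwards [hlo hε] with y hy
  have h1 : h y - h x - ⟪p, y - x⟫_ℝ ≤ ε * ‖y - x‖ := by
    have := le_trans (le_abs_self _) hy
    simpa [Real.norm_eq_abs, InnerProductSpace.toDual_apply_apply] using this
  have := hle y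
  calc u y - u x - ⟪p, y - x⟫_ℝ ≤ h y - h x - ⟪p, y - x⟫_ℝ := by rw [heq] at *; linarith
    _ ≤ ε * ‖y - x‖ := h1

lemma convex_superDiff (u : En n → ℝ) (x : En n) : Convex ℝ (superDiff u x) := by
  intro p hp q hq a b ha hb hab
  intro ε hε
  filter_upwards [hp ε hε, hq ε hε] with y h1 h2
  have e1 : a * (u y - u x - ⟪p, y - x⟫_ℝ) ≤ a * (ε * ‖y - x‖) :=
    mul_le_mul_of_nonneg_left h1 ha
  have e2 : b * (u y - u x - ⟪q, y - x⟫_ℝ) ≤ b * (ε * ‖y - x‖) :=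
    mul_le_mul_of_nonneg_left h2 hb
  have hi : ⟪a • p + b • q, y - x⟫_ℝ = a * ⟪p, y - x⟫_ℝ + b * ⟪q, y - x⟫_ℝ := by
    rw [inner_add_left, real_inner_smul_left, real_inner_smul_left]
  have hsum : a * (ε * ‖y - x‖) + b * (ε * ‖y - x‖) = ε * ‖y - x‖ := by
    rw [← add_mul, hab, one_mul]
  have hexp : u y - u x - ⟪a • p + b • q, y - x⟫_ℝ
      = a * (u y - u x - ⟪p, y - x⟫_ℝ) + b * (u y - u x - ⟪q, y - x⟫_ℝ) := by
    rw [hi]; linear_combination (u y - u x) * hab.symm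
  rw [hexp]
  linarith [e1, e2, hsum]

/-- squeeze between two functions with the same gradient -/
lemma hasGradientAt_of_squeeze {g u h : En n → ℝ} {p z : En n}
    (hg : HasGradientAt g p z) (hh : HasGradientAt h p z)
    (hgu : ∀ y, g y ≤ u y) (huh : ∀ y, u y ≤ h y)
    (hgz : g z = u z) (hhz : u z = h z) :
    HasGradientAt u p z := by
  rw [hasGradientAt_iff_hasFDerivAt] at hg hh ⊢
  rw [hasFDerivAt_iff_isLittleO_nhds_zero] at hg hh ⊢
  rw [Asymptotics.isLittleO_iff] at hg hh ⊢
  intro c hc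
  filter_upwards [hg hc, hh hc] with y h1 h2
  rw [Real.norm_eq_abs, abs_le] at h1 h2 ⊢
  constructor
  · linarith [hgu (z + y), h1.1, hgz]
  · linarith [huh (z + y), h2.2, hhz]

end Aux
section Aux2

open scoped InnerProductSpace
open Metric Set Filter

variable {n : ℕ}

/-- Compactness of the convex hull of a compact set in `En n` via Carathéodory. -/
lemma isCompact_convexHull' {P : Set (En n)} (hP : IsCompact P) (hne : P.Nonempty) :
    IsCompact (convexHull ℝ P) := by
  obtain ⟨p₀, hp₀⟩ := hne
  set m := n + 1 with hm
  set Φ : (Fin m → ℝ) × (Fin m → En n) → En n := fun wv => ∑ i, wv.1 i • wv.2 i with hΦ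
  have hcont : Continuous Φ := by
    apply continuous_finset_sum
    intro i _
    exact ((continuous_apply i).comp continuous_fst).smul
      ((continuous_apply i).comp continuous_snd)
  have hcomp : IsCompact ((stdSimplex ℝ (Fin m)) ×ˢ (Set.pi Set.univ fun _ : Fin m => P)) :=
    (isCompact_stdSimplex _ _).prod (isCompact_univ_pi fun _ => hP)
  have himage : convexHull ℝ P
      = Φ '' ((stdSimplex ℝ (Fin m)) ×ˢ (Set.pi Set.univ fun _ : Fin m => P)) := by
    apply Set.Subset.antisymm
    · intro y hy
      obtain ⟨ι, hfin, z, w, hzP, hai, hw0, hw1, hsum⟩ :=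
        eq_pos_convex_span_of_mem_convexHull hy
      letI : Fintype ι := hfin
      have hcard : Fintype.card ι ≤ m := by
        have h1 := hai.card_le_finrank_succ
        have h2 : Module.finrank ℝ (vectorSpan ℝ (Set.range z)) ≤ n := by
          have := Submodule.finrank_le (vectorSpan ℝ (Set.range z))
          simpa [finrank_euclideanSpace_fin] using this
        omega
      obtain ⟨e⟩ : Nonempty (ι ↪ Fin m) := by
        apply Function.Embedding.nonempty_of_card_le
        simpa using hcard
      classical
      set w' : Fin m → ℝ := fun i => if h : ∃ j, e j = i then w h.choose else 0 with hw'
      set v' : Fin m → En n := fun i => if h : ∃ j, e j = i then z h.choose else p₀ with hv'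
      have hwe : ∀ j, w' (e j) = w j := by
        intro j
        have hex : ∃ j', e j' = e j := ⟨j, rfl⟩
        have : hex.choose = j := e.injective hex.choose_spec
        simp only [hw', dif_pos hex, this]
      have hve : ∀ j, v' (e j) = z j := by
        intro j
        have hex : ∃ j', e j' = e j := ⟨j, rfl⟩
        have : hex.choose = j := e.injective hex.choose_spec
        simp only [hv', dif_pos hex, this]
      have hwzero : ∀ i ∈ Finset.univ, i ∉ Finset.univ.map e → w' i = 0 := by
        intro i _ hi
        have h : ¬ ∃ j, e j = i := fun ⟨j, hj⟩ =>
          hi (Finset.mem_map.2 ⟨j, Finset.mem_univ j, hj⟩)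
        simp only [hw', dif_neg h]
      have hsum1 : ∑ i, w' i = 1 := by
        rw [← Finset.sum_subset (Finset.subset_univ (Finset.univ.map e)) hwzero,
          Finset.sum_map]
        simpa only [hwe] using hw1
      refine ⟨(w', v'), ⟨⟨fun i => ?_, hsum1⟩, fun i _ => ?_⟩, ?_⟩
      · by_cases h : ∃ j, e j = i
        · simp only [hw', dif_pos h]; exact (hw0 _).le
        · simp only [hw', dif_neg h]; exact le_refl 0
      · by_cases h : ∃ j, e j = i
        · simp only [hv', dif_pos h]
          exact hzP ⟨h.choose, rfl⟩
        · simp only [hv', dif_neg h]; exact hp₀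
      · show (∑ i : Fin m, w' i • v' i) = y
        have hszero : ∀ i ∈ Finset.univ, i ∉ Finset.univ.map e → w' i • v' i = 0 := by
          intro i hi1 hi2
          rw [hwzero i hi1 hi2, zero_smul]
        rw [← Finset.sum_subset (Finset.subset_univ (Finset.univ.map e)) hszero,
          Finset.sum_map]
        rw [← hsum]
        apply Finset.sum_congr rfl
        intro j _
        rw [hwe, hve]
    · rintro y ⟨⟨w, v⟩, ⟨hw, hv⟩, rfl⟩
      exact (convex_convexHull ℝ P).sum_mem (fun i _ => hw.1 i) hw.2
        (fun i _ => subset_convexHull ℝ P (hv i (Set.mem_univ i)))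
  rw [himage]
  exact hcomp.image hcont

end Aux2
section Aux3

open scoped InnerProductSpace
open Metric Set Filter

variable {n : ℕ} {S : Set (En n)}

lemma infDist_lower_bound (S : Set (En n)) (x y : En n) :
    Metric.infDist x S - ‖y - x‖ ≤ Metric.infDist y S := by
  have h := Metric.infDist_le_infDist_add_dist (x := x) (y := y) (s := S)
  rw [dist_eq_norm, norm_sub_rev] at h
  linarith

/-- On the open segment between `x` and a projection `q`, the distance function has
gradient `(x - q)/d`. -/
lemma hasGradientAt_infDist_segment {x q : En n}
    (hq : q ∈ projSet S x) (hd : 0 < Metric.infDist x S) {t : ℝ} (ht0 : 0 < t) (ht1 : t < 1) :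
    HasGradientAt (fun z => Metric.infDist z S)
      ((Metric.infDist x S)⁻¹ • (x - q)) (x + t • (q - x)) := by
  set d := Metric.infDist x S with hdd
  set z := x + t • (q - x) with hz
  have hxq : ‖x - q‖ = d := by rw [← dist_eq_norm]; exact hq.2
  have hqx : ‖q - x‖ = d := by rw [norm_sub_rev]; exact hxq
  have hqx0 : q - x ≠ 0 := by
    intro h0
    rw [h0, norm_zero] at hqx
    exact hd.ne hqx
  have hzx : z - x = t • (q - x) := by rw [hz]; exact add_sub_cancel_left x _
  have hzq : z - q = (1 - t) • (x - q) := by rw [hz]; module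
  have hzxnorm : ‖z - x‖ = t * d := by
    rw [hzx, norm_smul, Real.norm_eq_abs, abs_of_pos ht0, hqx]
  have hzqnorm : ‖z - q‖ = (1 - t) * d := by
    rw [hzq, norm_smul, Real.norm_eq_abs, abs_of_pos (by linarith), hxq]
  have hzxne : z ≠ x := by
    intro h
    have : t • (q - x) = 0 := by rw [← hzx, h, sub_self]
    rcases smul_eq_zero.1 this with h' | h'
    · exact ht0.ne' h'
    · exact hqx0 h'
  have hzqne : z ≠ q := by
    intro h
    have h0 : ‖z - q‖ = 0 := by rw [h, sub_self, norm_zero]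
    rw [hzqnorm] at h0
    nlinarith
  have hg0 := hasGradientAt_norm_sub x z hzxne
  have hg := hg0.const_sub' d
  have hh := hasGradientAt_norm_sub q z hzqne
  have hgeq : -(‖z - x‖⁻¹ • (z - x)) = d⁻¹ • (x - q) := by
    rw [hzxnorm, hzx, smul_smul]
    have : (t * d)⁻¹ * t = d⁻¹ := by
      field_simp
    rw [this, ← smul_neg, neg_sub]
  have hheq : ‖z - q‖⁻¹ • (z - q) = d⁻¹ • (x - q) := by
    rw [hzqnorm, hzq, smul_smul]
    have : ((1 - t) * d)⁻¹ * (1 - t) = d⁻¹ := by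
      have h1t : (1 : ℝ) - t ≠ 0 := by linarith
      field_simp
    rw [this]
  rw [hgeq] at hg
  rw [hheq] at hh
  have hgu : ∀ y, d - ‖y - x‖ ≤ Metric.infDist y S := fun y => infDist_lower_bound S x y
  have huh : ∀ y, Metric.infDist y S ≤ ‖y - q‖ := by
    intro y
    rw [← dist_eq_norm]
    exact Metric.infDist_le_dist_of_mem hq.1
  have hval : Metric.infDist z S = d - t * d := by
    apply le_antisymm
    · have := huh z; rw [hzqnorm] at this; linarith
    · have := hgu z; rw [hzxnorm] at this; linarith
  exact hasGradientAt_of_squeeze hg hh hgu huh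
    (by rw [hzxnorm, hval]) (by rw [hzqnorm, hval]; ring)

/-- Any projection direction is a reachable gradient. -/
lemma proj_dir_mem_reachGrad (hSc : IsClosed S) {x q : En n}
    (hq : q ∈ projSet S x) (hd : 0 < Metric.infDist x S) :
    (Metric.infDist x S)⁻¹ • (x - q) ∈ reachGrad (fun z => Metric.infDist z S) x := by
  set d := Metric.infDist x S with hdd
  have hxq : ‖x - q‖ = d := by rw [← dist_eq_norm]; exact hq.2
  have hqx0 : q - x ≠ 0 := by
    intro h0
    have : x - q = 0 := by rw [← neg_sub q x, h0, neg_zero]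
    rw [this, norm_zero] at hxq
    exact hd.ne hxq
  set t : ℕ → ℝ := fun k => ((k : ℝ) + 2)⁻¹ with ht
  have ht0 : ∀ k, 0 < t k := fun k => by positivity
  have ht1 : ∀ k, t k < 1 := by
    intro k
    rw [ht]
    rw [inv_lt_one_iff₀]
    right
    have : (0:ℝ) ≤ (k:ℝ) := Nat.cast_nonneg k
    linarith
  have hgrad : ∀ k, HasGradientAt (fun z => Metric.infDist z S) (d⁻¹ • (x - q))
      (x + t k • (q - x)) := fun k => hasGradientAt_infDist_segment hq hd (ht0 k) (ht1 k)
  refine ⟨fun k => x + t k • (q - x), ?_, ?_, ?_, ?_⟩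
  · intro k h
    have : t k • (q - x) = 0 := by
      have := congrArg (fun w => w - x) h
      simpa [add_sub_cancel_left] using this
    rcases smul_eq_zero.1 this with h' | h'
    · exact (ht0 k).ne' h'
    · exact hqx0 h'
  · intro k
    exact (hgrad k).differentiableAt
  · have htt : Tendsto t atTop (nhds 0) := by
      apply Tendsto.inv_tendsto_atTop
      apply tendsto_atTop_add_const_right
      exact tendsto_natCast_atTop_atTop
    have : Tendsto (fun k => x + t k • (q - x)) atTop (nhds (x + (0:ℝ) • (q - x))) :=
      tendsto_const_nhds.add (htt.smul_const (q - x))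
    simpa using this
  · have : ∀ k, gradient (fun z => Metric.infDist z S) (x + t k • (q - x)) = d⁻¹ • (x - q) :=
      fun k => (hgrad k).gradient
    rw [show (fun k => gradient (fun z => Metric.infDist z S) (x + t k • (q - x)))
      = fun _ => d⁻¹ • (x - q) from funext this]
    exact tendsto_const_nhds

end Aux3
section Aux4

open scoped InnerProductSpace
open Metric Set Filter

variable {n : ℕ} {S : Set (En n)}

/-- Projection directions are supergradients. -/
lemma proj_dir_mem_superDiff {x q : En n}
    (hq : q ∈ projSet S x) (hd : 0 < Metric.infDist x S) :
    (Metric.infDist x S)⁻¹ • (x - q) ∈ superDiff (fun z => Metric.infDist z S) x := by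
  set d := Metric.infDist x S with hdd
  have hxq : ‖x - q‖ = d := by rw [← dist_eq_norm]; exact hq.2
  have hxqne : x ≠ q := by
    intro h
    rw [h, sub_self, norm_zero] at hxq
    exact hd.ne hxq
  have hh := hasGradientAt_norm_sub q x hxqne
  rw [hxq] at hh
  apply mem_superDiff_of_touching (h := fun y => ‖y - q‖) ?_ ?_ hh
  · intro y
    show Metric.infDist y S ≤ ‖y - q‖
    rw [← dist_eq_norm]
    exact Metric.infDist_le_dist_of_mem hq.1
  · show Metric.infDist x S = ‖x - q‖
    exact hxq.symm

/-- Key directional estimate: every supergradient dominates some projection direction in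
every direction `v`. -/
lemma exists_proj_dir_le (hS : S.Nonempty) (hSc : IsClosed S) {x : En n}
    (hd : 0 < Metric.infDist x S) {p : En n}
    (hp : p ∈ superDiff (fun z => Metric.infDist z S) x) (v : En n) :
    ∃ q ∈ projSet S x, ⟪(Metric.infDist x S)⁻¹ • (x - q), v⟫_ℝ ≤ ⟪p, v⟫_ℝ := by
  classical
  set u : En n → ℝ := fun z => Metric.infDist z S with hu
  set d := Metric.infDist x S with hdd
  set t : ℕ → ℝ := fun k => ((k : ℝ) + 1)⁻¹ with htdef
  have ht0 : ∀ k, 0 < t k := fun k => by positivity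
  have ht1 : ∀ k, t k ≤ 1 := by
    intro k
    rw [htdef]
    rw [inv_le_one_iff₀]
    right
    have : (0:ℝ) ≤ (k:ℝ) := Nat.cast_nonneg k
    linarith
  have htt : Tendsto t atTop (nhds 0) := by
    apply Tendsto.inv_tendsto_atTop
    apply tendsto_atTop_add_const_right
    exact tendsto_natCast_atTop_atTop
  set y : ℕ → En n := fun k => x + t k • v with hy
  have hyx : ∀ k, y k - x = t k • v := fun k => add_sub_cancel_left x _
  have hyt : Tendsto y atTop (nhds x) := by
    have : Tendsto (fun k => x + t k • v) atTop (nhds (x + (0:ℝ) • v)) :=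
      tendsto_const_nhds.add (htt.smul_const v)
    simpa using this
  choose q hqS hqd using fun k => hSc.exists_infDist_eq_dist hS (y k)
  have hqb : ∀ k, q k ∈ closedBall x (d + 2 * ‖v‖) := by
    intro k
    rw [mem_closedBall, dist_comm]
    have h1 : dist x (q k) ≤ dist x (y k) + dist (y k) (q k) := dist_triangle _ _ _
    have h2 : dist (y k) (q k) = u (y k) := (hqd k).symm
    have h3 : u (y k) ≤ u x + dist (y k) x := Metric.infDist_le_infDist_add_dist
    have h4 : dist x (y k) = t k * ‖v‖ := by
      rw [dist_eq_norm]
      rw [show x - y k = -(t k • v) by simp only [hy]; abel]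
      rw [norm_neg, norm_smul, Real.norm_eq_abs, abs_of_pos (ht0 k)]
    have h5 : t k * ‖v‖ ≤ ‖v‖ := by
      have := mul_le_mul_of_nonneg_right (ht1 k) (norm_nonneg v)
      linarith
    rw [dist_comm (y k) x] at h3
    have : u x = d := rfl
    nlinarith [h1, h2, h3, h4, h5]
  obtain ⟨q₀, hq₀cl, φ, hφmono, hφtend⟩ :=
    tendsto_subseq_of_bounded (Metric.isBounded_closedBall (x := x) (r := d + 2*‖v‖))
      hqb
  have hq₀S : q₀ ∈ S := hSc.mem_of_tendsto hφtend (Eventually.of_forall fun k => hqS _)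
  have hφatTop : Tendsto φ atTop atTop := hφmono.tendsto_atTop
  have hdq : Tendsto (fun k => dist x (q (φ k))) atTop (nhds d) := by
    have hlow : ∀ k, d ≤ dist x (q (φ k)) := fun k =>
      Metric.infDist_le_dist_of_mem (hqS (φ k))
    have hup : ∀ k, dist x (q (φ k)) ≤ d + 2 * (t (φ k) * ‖v‖) := by
      intro k
      have h1 : dist x (q (φ k)) ≤ dist x (y (φ k)) + dist (y (φ k)) (q (φ k)) :=
        dist_triangle _ _ _
      have h2 : dist (y (φ k)) (q (φ k)) = u (y (φ k)) := (hqd (φ k)).symm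
      have h3 : u (y (φ k)) ≤ u x + dist (y (φ k)) x := Metric.infDist_le_infDist_add_dist
      have h4 : dist x (y (φ k)) = t (φ k) * ‖v‖ := by
        rw [dist_eq_norm]
        rw [show x - y (φ k) = -(t (φ k) • v) by simp only [hy]; abel]
        rw [norm_neg, norm_smul, Real.norm_eq_abs, abs_of_pos (ht0 _)]
      rw [dist_comm (y (φ k)) x] at h3
      have : u x = d := rfl
      nlinarith [h1, h2, h3, h4]
    have httφ : Tendsto (fun k => t (φ k)) atTop (nhds 0) := htt.comp hφatTop
    have hub : Tendsto (fun k => d + 2 * (t (φ k) * ‖v‖)) atTop (nhds (d + 2 * (0 * ‖v‖))) :=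
      tendsto_const_nhds.add (Tendsto.const_mul 2 (httφ.mul_const ‖v‖))
    simp only [zero_mul, mul_zero, add_zero] at hub
    exact tendsto_of_tendsto_of_tendsto_of_le_of_le tendsto_const_nhds hub
      (fun k => hlow k) (fun k => hup k)
  have hdq₀ : dist x q₀ = d := by
    have h1 : Tendsto (fun k => dist x (q (φ k))) atTop (nhds (dist x q₀)) :=
      (Continuous.dist continuous_const continuous_id).continuousAt.tendsto.comp hφtend |>.congr
        (fun k => rfl)
    exact tendsto_nhds_unique h1 hdq
  refine ⟨q₀, ⟨hq₀S, hdq₀⟩, ?_⟩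
  -- now the inner product estimate
  set w : ℕ → En n := fun k => ‖x - q k‖⁻¹ • (x - q k) with hw
  have hkey : ∀ k, u x + t k * ⟪w k, v⟫_ℝ ≤ u (y k) := by
    intro k
    have hqk0 : (0:ℝ) < ‖x - q k‖ := by
      rw [← dist_eq_norm]
      exact lt_of_lt_of_le hd (Metric.infDist_le_dist_of_mem (hqS k))
    have hCS : ⟪x - q k, y k - q k⟫_ℝ ≤ ‖x - q k‖ * ‖y k - q k‖ :=
      real_inner_le_norm _ _
    have hexp : ⟪x - q k, y k - q k⟫_ℝ = ‖x - q k‖^2 + t k * ⟪x - q k, v⟫_ℝ := by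
      rw [show y k - q k = (x - q k) + t k • v by simp only [hy]; abel]
      rw [inner_add_right, real_inner_smul_right, real_inner_self_eq_norm_sq]
    have hyq : ‖y k - q k‖ = u (y k) := by
      rw [← dist_eq_norm]; exact (hqd k).symm
    have hxqk : d ≤ ‖x - q k‖ := by
      rw [← dist_eq_norm]
      exact Metric.infDist_le_dist_of_mem (hqS k)
    have h8 : ‖x - q k‖ * (‖x - q k‖ + t k * (‖x - q k‖⁻¹ * ⟪x - q k, v⟫_ℝ))
        = ‖x - q k‖^2 + t k * ⟪x - q k, v⟫_ℝ := by
      field_simp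
    have h9 : ‖x - q k‖ * (‖x - q k‖ + t k * (‖x - q k‖⁻¹ * ⟪x - q k, v⟫_ℝ))
        ≤ ‖x - q k‖ * u (y k) := by
      rw [h8, ← hyq]
      rw [hexp] at hCS
      exact hCS
    have h10 : ‖x - q k‖ + t k * (‖x - q k‖⁻¹ * ⟪x - q k, v⟫_ℝ) ≤ u (y k) :=
      le_of_mul_le_mul_left (by linarith [h9]) hqk0
    have hux : u x = d := rfl
    rw [hw]
    simp only [real_inner_smul_left]
    linarith [h10, hxqk]
  have hεbound : ∀ ε : ℝ, 0 < ε → ⟪d⁻¹ • (x - q₀), v⟫_ℝ ≤ ⟪p, v⟫_ℝ + ε * ‖v‖ := by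
    intro ε hε
    have hev2 : ∀ᶠ k in atTop, u (y k) - u x - ⟪p, y k - x⟫_ℝ ≤ ε * ‖y k - x‖ :=
      hyt.eventually (hp ε hε)
    have hev3 : ∀ᶠ k in atTop, ⟪w k, v⟫_ℝ ≤ ⟪p, v⟫_ℝ + ε * ‖v‖ := by
      filter_upwards [hev2] with k hk
      rw [hyx k, real_inner_smul_right, norm_smul, Real.norm_eq_abs,
        abs_of_pos (ht0 k)] at hk
      have h11 : t k * ⟪w k, v⟫_ℝ ≤ t k * (⟪p, v⟫_ℝ + ε * ‖v‖) := by
        have := hkey k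
        nlinarith [this, hk]
      exact le_of_mul_le_mul_left h11 (ht0 k)
    have hev4 : ∀ᶠ k in atTop, ⟪w (φ k), v⟫_ℝ ≤ ⟪p, v⟫_ℝ + ε * ‖v‖ :=
      hφatTop.eventually hev3
    -- limit of w (φ k)
    have hsub : Tendsto (fun k => x - q (φ k)) atTop (nhds (x - q₀)) :=
      tendsto_const_nhds.sub hφtend
    have hnq₀ : ‖x - q₀‖ = d := by rw [← dist_eq_norm]; exact hdq₀
    have hnorm : Tendsto (fun k => ‖x - q (φ k)‖) atTop (nhds d) := by
      have := hsub.norm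
      rwa [hnq₀] at this
    have hinv : Tendsto (fun k => ‖x - q (φ k)‖⁻¹) atTop (nhds d⁻¹) :=
      hnorm.inv₀ hd.ne'
    have hwt : Tendsto (fun k => w (φ k)) atTop (nhds (d⁻¹ • (x - q₀))) :=
      hinv.smul hsub
    have hwv : Tendsto (fun k => ⟪w (φ k), v⟫_ℝ) atTop (nhds ⟪d⁻¹ • (x - q₀), v⟫_ℝ) :=
      hwt.inner tendsto_const_nhds
    exact le_of_tendsto hwv hev4
  apply le_of_forall_pos_le_add
  intro δ hδ
  have hε : (0:ℝ) < δ / (‖v‖ + 1) := by positivity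
  have := hεbound _ hε
  have hvle : δ / (‖v‖ + 1) * ‖v‖ ≤ δ := by
    rw [div_mul_eq_mul_div, div_le_iff₀ (by positivity)]
    nlinarith [norm_nonneg v]
  linarith

end Aux4
section Aux5

open scoped InnerProductSpace
open Metric Set Filter

variable {n : ℕ} {S : Set (En n)}

/-- Every reachable gradient is a projection direction. -/
lemma reachGrad_subset_projDirs (hS : S.Nonempty) (hSc : IsClosed S) {x : En n}
    (hd : 0 < Metric.infDist x S) {p : En n}
    (hp : p ∈ reachGrad (fun z => Metric.infDist z S) x) :
    p ∈ (fun q => (Metric.infDist x S)⁻¹ • (x - q)) '' projSet S x := by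
  classical
  set u : En n → ℝ := fun z => Metric.infDist z S with hu
  set d := Metric.infDist x S with hdd
  obtain ⟨xs, hne, hdiff, htend, hgrad⟩ := hp
  have hucont : Continuous u := (Metric.lipschitz_infDist_pt S).continuous
  have hud : Tendsto (fun k => u (xs k)) atTop (nhds d) := (hucont.tendsto x).comp htend
  have hpos : ∀ᶠ k in atTop, 0 < u (xs k) := hud.eventually (eventually_gt_nhds hd)
  have hkey : ∀ᶠ k in atTop, (xs k - u (xs k) • gradient u (xs k)) ∈ S ∧
      dist (xs k) (xs k - u (xs k) • gradient u (xs k)) = u (xs k) := by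
    filter_upwards [hpos] with k hk
    obtain ⟨q', hq'S, hq'd⟩ := hSc.exists_infDist_eq_dist hS (xs k)
    have hnq : ‖xs k - q'‖ = u (xs k) := by rw [← dist_eq_norm]; exact hq'd.symm
    have hne' : xs k ≠ q' := by
      intro h
      have h0 : u (xs k) = 0 := by rw [← hnq, h, sub_self, norm_zero]
      exact hk.ne' h0
    have hN := hasGradientAt_norm_sub q' (xs k) hne'
    have hNd : DifferentiableAt ℝ (fun y => ‖y - q'‖) (xs k) := hN.differentiableAt
    have hmin : IsLocalMin (fun y => ‖y - q'‖ - u y) (xs k) := by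
      apply Filter.Eventually.of_forall
      intro y
      have h1 : u y ≤ ‖y - q'‖ := by
        rw [← dist_eq_norm]
        exact Metric.infDist_le_dist_of_mem hq'S
      show ‖xs k - q'‖ - u (xs k) ≤ ‖y - q'‖ - u y
      rw [hnq]
      linarith
    have hfz : fderiv ℝ (fun y => ‖y - q'‖ - u y) (xs k) = 0 := hmin.fderiv_eq_zero
    have hsub : fderiv ℝ (fun y => ‖y - q'‖ - u y) (xs k)
        = fderiv ℝ (fun y => ‖y - q'‖) (xs k) - fderiv ℝ u (xs k) :=
      fderiv_sub hNd (hdiff k)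
    have hfeq : fderiv ℝ u (xs k) = fderiv ℝ (fun y => ‖y - q'‖) (xs k) :=
      (sub_eq_zero.1 (hsub ▸ hfz)).symm
    have hNfd : fderiv ℝ (fun y => ‖y - q'‖) (xs k)
        = (InnerProductSpace.toDual ℝ (En n)) (‖xs k - q'‖⁻¹ • (xs k - q')) :=
      (hasGradientAt_iff_hasFDerivAt.1 hN).fderiv
    have hG : gradient u (xs k) = ‖xs k - q'‖⁻¹ • (xs k - q') := by
      have h1 : HasGradientAt u (‖xs k - q'‖⁻¹ • (xs k - q')) (xs k) := by
        rw [hasGradientAt_iff_hasFDerivAt]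
        have h2 := (hdiff k).hasFDerivAt
        rwa [hfeq, hNfd] at h2
      exact h1.gradient
    constructor
    · rw [hG, hnq, smul_inv_smul₀ hk.ne', sub_sub_cancel]
      exact hq'S
    · rw [hG, hnq, smul_inv_smul₀ hk.ne', sub_sub_cancel]
      exact hq'd.symm
  set qs : ℕ → En n := fun k => xs k - u (xs k) • gradient u (xs k) with hqs
  have hqtend : Tendsto qs atTop (nhds (x - d • p)) := htend.sub (hud.smul hgrad)
  have hq₀S : (x - d • p) ∈ S := hSc.mem_of_tendsto hqtend (hkey.mono fun k hk => hk.1)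
  have hdist : dist x (x - d • p) = d := by
    have h1 : Tendsto (fun k => dist (xs k) (qs k)) atTop (nhds (dist x (x - d • p))) :=
      htend.dist hqtend
    have heq : (fun k => u (xs k)) =ᶠ[atTop] (fun k => dist (xs k) (qs k)) :=
      hkey.mono fun k hk => hk.2.symm
    exact tendsto_nhds_unique h1 (Filter.Tendsto.congr' heq hud)
  refine ⟨x - d • p, ⟨hq₀S, hdist⟩, ?_⟩
  show d⁻¹ • (x - (x - d • p)) = p
  rw [sub_sub_cancel, inv_smul_smul₀ hd.ne']

/-- The superdifferential is contained in the hull of projection directions. -/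
lemma superDiff_subset_hull (hS : S.Nonempty) (hSc : IsClosed S) {x : En n}
    (hd : 0 < Metric.infDist x S) :
    superDiff (fun z => Metric.infDist z S) x ⊆
      convexHull ℝ ((fun q => (Metric.infDist x S)⁻¹ • (x - q)) '' projSet S x) := by
  intro p hp
  set P := (fun q => (Metric.infDist x S)⁻¹ • (x - q)) '' projSet S x with hP
  by_contra hpn
  have hprojclosed : IsClosed (projSet S x) := by
    have hform : projSet S x = S ∩ {y | dist x y = Metric.infDist x S} := rfl
    rw [hform]
    exact hSc.inter (isClosed_eq (continuous_const.dist continuous_id) continuous_const)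
  have hproj : IsCompact (projSet S x) := by
    apply IsCompact.of_isClosed_subset (isCompact_closedBall x (Metric.infDist x S))
      hprojclosed
    intro y hy
    rw [mem_closedBall, dist_comm]
    exact le_of_eq hy.2
  have hPcomp : IsCompact P := hproj.image (by fun_prop)
  have hPne : P.Nonempty := by
    obtain ⟨q, hqS, hqd⟩ := hSc.exists_infDist_eq_dist hS x
    exact ⟨_, ⟨q, ⟨hqS, hqd.symm⟩, rfl⟩⟩
  have hKc : IsClosed (convexHull ℝ P) := (isCompact_convexHull' hPcomp hPne).isClosed
  obtain ⟨f, c, hpc, hcb⟩ :=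
    geometric_hahn_banach_point_closed (convex_convexHull ℝ P) hKc hpn
  set v := (InnerProductSpace.toDual ℝ (En n)).symm f with hv
  obtain ⟨q, hq, hle⟩ := exists_proj_dir_le hS hSc hd hp v
  have h1 : c < f ((Metric.infDist x S)⁻¹ • (x - q)) :=
    hcb _ (subset_convexHull ℝ P ⟨q, hq, rfl⟩)
  have h2 : ∀ y, f y = ⟪v, y⟫_ℝ := fun y => (InnerProductSpace.toDual_symm_apply).symm
  rw [h2] at h1 hpc
  linarith [hle, h1, hpc, real_inner_comm p v,
    real_inner_comm ((Metric.infDist x S)⁻¹ • (x - q)) v]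

end Aux5
/-- Extreme points of the superdifferential of the distance function at a
singular point: `extr D⁺d_S(x) = D*d_S(x) = D⁺d_S(x) ∩ ∂B₁(0)`. -/
theorem extreme_points_of_superdifferential_of_distance {n : ℕ} (S : Set (En n))
    (hS : S.Nonempty) (hSc : IsClosed S) (x : En n) (hx : x ∉ S)
    (hnd : ¬ DifferentiableAt ℝ (fun z => Metric.infDist z S) x) :
    Set.extremePoints ℝ (superDiff (fun z => Metric.infDist z S) x)
        = reachGrad (fun z => Metric.infDist z S) x ∧
      reachGrad (fun z => Metric.infDist z S) x
        = superDiff (fun z => Metric.infDist z S) x ∩ Metric.sphere (0 : En n) 1 := by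
  have hd : 0 < Metric.infDist x S := (hSc.notMem_iff_infDist_pos hS).1 hx
  set u : En n → ℝ := fun z => Metric.infDist z S with hu
  set P := (fun q => (Metric.infDist x S)⁻¹ • (x - q)) '' projSet S x with hP
  have hPD : P ⊆ superDiff u x := by
    rintro _ ⟨q, hq, rfl⟩
    exact proj_dir_mem_superDiff hq hd
  have hPs : P ⊆ Metric.sphere (0 : En n) 1 := by
    rintro _ ⟨q, hq, rfl⟩
    rw [mem_sphere_zero_iff_norm]
    rw [norm_smul, Real.norm_eq_abs, abs_of_pos (inv_pos.2 hd), ← dist_eq_norm, hq.2]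
    exact inv_mul_cancel₀ hd.ne'
  have hDK : superDiff u x ⊆ convexHull ℝ P := superDiff_subset_hull hS hSc hd
  have hKD : convexHull ℝ P ⊆ superDiff u x := convexHull_min hPD (convex_superDiff u x)
  have hE : superDiff u x = convexHull ℝ P := Set.Subset.antisymm hDK hKD
  have hRP : reachGrad u x = P := by
    apply Set.Subset.antisymm
    · intro p hp
      exact reachGrad_subset_projDirs hS hSc hd hp
    · rintro _ ⟨q, hq, rfl⟩
      exact proj_dir_mem_reachGrad hSc hq hd
  have hball : superDiff u x ⊆ Metric.closedBall (0 : En n) 1 := by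
    rw [hE]
    exact convexHull_min (hPs.trans Metric.sphere_subset_closedBall)
      (convex_closedBall _ _)
  have hsphere_extreme : superDiff u x ∩ Metric.sphere (0 : En n) 1 ⊆
      Set.extremePoints ℝ (superDiff u x) := by
    rintro p ⟨hpD, hps⟩
    refine ⟨hpD, fun a ha b hb hseg => ?_⟩
    by_cases hab : a = b
    · subst hab
      rw [openSegment_same] at hseg
      rw [Set.mem_singleton_iff] at hseg
      exact hseg.symm
    · exfalso
      have hmem := (strictConvex_closedBall ℝ (0 : En n) 1).openSegment_subset
        (hball ha) (hball hb) hab hseg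
      rw [interior_closedBall _ one_ne_zero, Metric.mem_ball, dist_zero_right] at hmem
      rw [mem_sphere_zero_iff_norm] at hps
      linarith
  have hextrP : Set.extremePoints ℝ (superDiff u x) ⊆ P := by
    rw [hE]
    exact extremePoints_convexHull_subset
  have hPsub : P ⊆ superDiff u x ∩ Metric.sphere (0 : En n) 1 :=
    fun p hp => ⟨hPD hp, hPs hp⟩
  constructor
  · rw [hRP]
    exact Set.Subset.antisymm hextrP (hPsub.trans hsphere_extreme)
  · rw [hRP]
    exact Set.Subset.antisymm hPsub (hsphere_extreme.trans hextrP)
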